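/- Let h₊, h₋ : V → ℝ satisfy max_{V} h₊ > 0 and min_{V} h₋ < 0, and suppose there exists a vertex x₀ ∈ V with h₊(x₀) ≤ 0 and h₋(x₀) < 0. Then there exists a constant Λ₀ ∈ ℝ (depending on the graph, h₊ and h₋) such that for every Λ > Λ₀ the equation −Δu = h₊e^{u} + h₋e^{−u} − Λ has no solution u : V → ℝ. -/

import Mathlib

open Finset Real Filter

lemma exp_ge_quarter_sq {x : ℝ} (hx : 0 ≤ x) : x^2/4 ≤ Real.exp x := by
  have h := Real.add_one_le_exp (x/2)
  have h2 : Real.exp x = Real.exp (x/2) * Real.exp (x/2) := by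
    rw [← Real.exp_add]; ring_nf
  nlinarith [Real.exp_pos (x/2)]

lemma no_deep {A B c M s : ℝ} (hc : 0 < c) (hA : 0 < A) (hB : 0 ≤ B) (hM : 0 ≤ M)
    (hs : 2*M + 2*((2*A + B + 1)/c) + 2 ≤ s)
    (hineq : c * Real.exp s ≤ A*(M+s) + B) : False := by
  set C := (2*A + B + 1)/c with hCdef
  have hCpos : 0 < C := by positivity
  have hCc : c * C = 2*A + B + 1 := by rw [hCdef]; field_simp [hc.ne']
  have hs2 : M + C ≤ s/2 := by linarith
  have h1 : 1 + s/2 ≤ Real.exp (s/2) := by linarith [Real.add_one_le_exp (s/2)]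
  have h2 : Real.exp (M + C) ≤ Real.exp (s/2) := Real.exp_le_exp.mpr hs2
  have h3 : (1+M)*(1+C) ≤ Real.exp (M + C) := by
    rw [Real.exp_add]
    have hM1 : 1 + M ≤ Real.exp M := by linarith [Real.add_one_le_exp M]
    have hC1 : 1 + C ≤ Real.exp C := by linarith [Real.add_one_le_exp C]
    have := mul_le_mul hM1 hC1 (by linarith) (le_of_lt (Real.exp_pos M))
    linarith
  have hes : Real.exp s = Real.exp (s/2) * Real.exp (s/2) := by
    rw [← Real.exp_add]; ring_nf
  have hspos : 0 < s := by linarith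
  have key : ((1+M)*(1+C)) * (1 + s/2) ≤ Real.exp (s/2) * Real.exp (s/2) := by
    have hA1 : (1+M)*(1+C) ≤ Real.exp (s/2) := le_trans h3 h2
    have := mul_le_mul hA1 h1 (by nlinarith) (le_of_lt (Real.exp_pos (s/2)))
    linarith
  have key2 : c * (((1+M)*(1+C)) * (1 + s/2)) ≤ A*(M+s) + B := by
    calc c * (((1+M)*(1+C)) * (1 + s/2)) ≤ c * (Real.exp (s/2) * Real.exp (s/2)) := by
          exact mul_le_mul_of_nonneg_left key (le_of_lt hc)
      _ = c * Real.exp s := by rw [hes]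
      _ ≤ A*(M+s) + B := hineq
  nlinarith [mul_nonneg hM hspos.le, mul_nonneg hA.le hM, mul_nonneg hA.le hspos.le,
    mul_nonneg (mul_nonneg hM hCpos.le) hspos.le]

lemma bnd_mul {a B e : ℝ} (h1 : -B ≤ a) (h2 : a ≤ B) (he0 : 0 < e) (he1 : e ≤ 1) :
    a * e ≤ B := by nlinarith

lemma caseM0 {A c Λ M s : ℝ} (hc : 0 < c) (hA : 0 < A) (hM : M ≤ 0) (hΛ : A^2/c < Λ)
    (hkey : Λ + c * Real.exp s ≤ A * (M + s)) : False := by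
  have hcΛ : A^2 < c*Λ := by have := (div_lt_iff₀ hc).mp hΛ; linarith
  have hAs : A*(M+s) ≤ A*s := by nlinarith
  rcases le_or_gt s 0 with hs | hs
  · have h1 : A*s ≤ 0 := mul_nonpos_of_nonneg_of_nonpos hA.le hs
    have h2 : 0 < c * Real.exp s := mul_pos hc (Real.exp_pos s)
    have hΛneg : Λ < 0 := by linarith
    nlinarith [sq_nonneg A]
  · have hq := exp_ge_quarter_sq hs.le
    nlinarith [sq_nonneg (c*s - 2*A), mul_le_mul_of_nonneg_left hq hc.le]

lemma cond4' {A α β d Λ : ℝ} (hA : 0 < A) (hα : 0 < α) (hβ : 0 < β) (hd : 0 < d)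
    (hΛ3 : 144*A^2*(α+β)/d + 1 < Λ) : α*Λ + β < d * Real.exp (Λ/(6*A)) := by
  have hpos : 0 < 144*A^2*(α+β)/d := by positivity
  have hΛ1 : 1 < Λ := by linarith
  have hΛpos : 0 < Λ := by linarith
  have hquad : (Λ/(6*A))^2/4 ≤ Real.exp (Λ/(6*A)) := exp_ge_quarter_sq (by positivity)
  have hd1 : 144*A^2*(α+β) + d < d * Λ := by
    have h := (div_lt_iff₀ hd).mp (by linarith : 144*A^2*(α+β)/d < Λ - 1)
    nlinarith
  have h2 : 144*A^2*(α*Λ + β) < d*Λ^2 := by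
    nlinarith [mul_lt_mul_of_pos_right hd1 hΛpos,
      mul_nonneg hβ.le (by linarith : (0:ℝ) ≤ Λ - 1), sq_nonneg A]
  have hfq : d * ((Λ/(6*A))^2/4) = d*Λ^2/(144*A^2) := by field_simp; ring
  calc α*Λ + β < d*Λ^2/(144*A^2) := by
        rw [lt_div_iff₀ (by positivity : (0:ℝ) < 144*A^2)]; linarith
    _ = d*((Λ/(6*A))^2/4) := hfq.symm
    _ ≤ d * Real.exp (Λ/(6*A)) := mul_le_mul_of_nonneg_left hquad hd.le

lemma step_target {μM W ωm G H HJ Λ B : ℝ} (hωm : 0 < ωm) (hμM : 0 < μM)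
    (hW0 : 0 ≤ W) (hΛB : 0 < Λ + B) (hHj1 : 1 ≤ HJ) (hG : G*ωm = ωm + μM + W)
    (hH : H = 2*G) :
    μM*(Λ+B) + W*((HJ - 1)*(Λ+B)) ≤ ωm*((H*HJ - HJ)*(Λ+B)) := by
  have hrw : ωm*((H*HJ - HJ)*(Λ+B)) = HJ*(Λ+B)*(2*(G*ωm) - ωm) := by rw [hH]; ring
  rw [hrw, hG]
  nlinarith [mul_nonneg (mul_nonneg (by linarith : (0:ℝ) ≤ HJ - 1) hΛB.le) hW0,
    mul_nonneg (mul_nonneg (by linarith : (0:ℝ) ≤ HJ - 1) hΛB.le) hμM.le,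
    mul_nonneg (mul_nonneg (by linarith : (0:ℝ) ≤ HJ) hΛB.le) hωm.le,
    mul_nonneg (mul_nonneg (by linarith : (0:ℝ) ≤ HJ - 1) hΛB.le) hμM.le]

lemma final_h5 {Z A M y : ℝ} (hZ0 : 0 ≤ Z) (hA0 : 0 < A) (hM0 : 0 < M) (hy : 0 ≤ y)
    (h1 : y * Real.exp (M/2) ≤ Z + 3*A*M) : y ≤ Z + 6*A := by
  by_contra h
  push_neg at h
  have hge : 1 + M/2 ≤ Real.exp (M/2) := by linarith [Real.add_one_le_exp (M/2)]
  nlinarith [mul_le_mul_of_nonneg_left hge hy, mul_nonneg hZ0 hM0.le]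

/-- The (μ-)Laplacian of `u` at vertex `x` on a finite weighted graph. -/
noncomputable def graphLap {V : Type*} [Fintype V] (ω : V → V → ℝ) (μ : V → ℝ)
    (u : V → ℝ) (x : V) : ℝ :=
  (1 / μ x) * ∑ y, ω x y * (u y - u x)

/-- Connectedness: any two vertices are joined by a path of adjacent vertices. -/
def graphConnected {V : Type*} [Fintype V] (ω : V → V → ℝ) : Prop :=
  ∀ x y : V, ∃ (n : ℕ) (p : ℕ → V), p 0 = x ∧ p n = y ∧ ∀ i < n, 0 < ω (p i) (p (i + 1))

/-- Maximum of a real function on a finite nonempty vertex set. -/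
noncomputable def maxV {V : Type*} [Fintype V] [Nonempty V] (f : V → ℝ) : ℝ :=
  Finset.univ.sup' Finset.univ_nonempty f

/-- Minimum of a real function on a finite nonempty vertex set. -/
noncomputable def minV {V : Type*} [Fintype V] [Nonempty V] (f : V → ℝ) : ℝ :=
  Finset.univ.inf' Finset.univ_nonempty f

set_option maxHeartbeats 1000000 in
/-- Non-existence for large constants `Λ`. -/
theorem stmt_7 {V : Type*} [Fintype V] [Nonempty V]
    (ω : V → V → ℝ) (μ : V → ℝ)
    (hsymm : ∀ x y, ω x y = ω y x)
    (hnonneg : ∀ x y, 0 ≤ ω x y)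
    (hconn : graphConnected ω)
    (hμ : ∀ x, 0 < μ x)
    (hp hm : V → ℝ)
    (hmaxp : 0 < maxV hp)
    (hminm : minV hm < 0)
    (hx0 : ∃ x₀ : V, hp x₀ ≤ 0 ∧ hm x₀ < 0) :
    ∃ Λ₀ : ℝ, ∀ Λ > Λ₀, ¬∃ u : V → ℝ,
      ∀ x, -graphLap ω μ u x = hp x * Real.exp (u x) + hm x * Real.exp (-u x) - Λ := by
  classical
  obtain ⟨x₀, hp0le, hm0neg⟩ := hx0
  set c : ℝ := -hm x₀ with hcdef
  clear_value c
  have hc : 0 < c := by rw [hcdef]; linarith only [hm0neg]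
  -- a vertex with positive hp
  have hx1 : ∃ x : V, 0 < hp x := by
    obtain ⟨x, -, hx⟩ := Finset.exists_mem_eq_sup' (Finset.univ_nonempty (α := V)) hp
    exact ⟨x, by rw [maxV, hx] at hmaxp; exact hmaxp⟩
  obtain ⟨x₁, hx1⟩ := hx1
  -- choose path data
  choose nf pf hpf0 hpfn hpfpos using hconn
  set NN : ℕ := Finset.univ.sup (fun q : V × V => nf q.1 q.2) with hNNdef
  clear_value NN
  have hNNle : ∀ x y : V, nf x y ≤ NN := by
    intro x y
    rw [hNNdef]
    exact Finset.le_sup (f := fun q : V × V => nf q.1 q.2) (Finset.mem_univ (x, y))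
  -- a positive edge exists
  have hedge : ∃ q : V × V, 0 < ω q.1 q.2 := by
    have hne : x₀ ≠ x₁ := by
      intro h; rw [h] at hp0le; linarith only [hp0le, hx1]
    rcases Nat.eq_zero_or_pos (nf x₀ x₁) with h | h
    · exact absurd ((hpf0 x₀ x₁).symm.trans (h ▸ hpfn x₀ x₁)) hne
    · exact ⟨(pf x₀ x₁ 0, pf x₀ x₁ 1), hpfpos x₀ x₁ 0 h⟩
  have hSne : (Finset.univ.filter (fun q : V × V => 0 < ω q.1 q.2)).Nonempty := by
    obtain ⟨q, hq⟩ := hedge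
    exact ⟨q, by simp [hq]⟩
  set ωm : ℝ := (Finset.univ.filter (fun q : V × V => 0 < ω q.1 q.2)).inf' hSne
      (fun q => ω q.1 q.2) with hωmdef
  clear_value ωm
  have hωm : 0 < ωm := by
    rw [hωmdef, Finset.lt_inf'_iff]
    intro q hq
    simpa using (Finset.mem_filter.mp hq).2
  have hωmle : ∀ x y : V, 0 < ω x y → ωm ≤ ω x y := by
    intro x y h
    rw [hωmdef]
    exact Finset.inf'_le (f := fun q : V × V => ω q.1 q.2)
      (b := ((x, y) : V × V)) (by simp [h])
  -- measure bounds
  set μm : ℝ := minV μ with hμmdef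
  clear_value μm
  have hμmle : ∀ x, μm ≤ μ x := by
    intro x
    rw [hμmdef, minV]
    exact Finset.inf'_le μ (Finset.mem_univ x)
  have hμm : 0 < μm := by
    rw [hμmdef, minV, Finset.lt_inf'_iff]; intro b _; exact hμ b
  set μM : ℝ := maxV μ with hμMdef
  clear_value μM
  have hμMge : ∀ x, μ x ≤ μM := by
    intro x
    rw [hμMdef, maxV]
    exact Finset.le_sup' μ (Finset.mem_univ x)
  have hμM : 0 < μM := lt_of_lt_of_le (hμ x₀) (hμMge x₀)
  -- weight bounds
  set W : ℝ := maxV (fun x => ∑ y, ω x y) with hWdef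
  clear_value W
  have hWge : ∀ x, ∑ y, ω x y ≤ W := by
    intro x
    rw [hWdef, maxV]
    exact Finset.le_sup' (fun x => ∑ y, ω x y) (Finset.mem_univ x)
  have hW0 : 0 ≤ W := le_trans (Finset.sum_nonneg (fun y _ => hnonneg x₀ y)) (hWge x₀)
  -- coefficient bounds
  have hPp : ∀ x, |hp x| ≤ maxV (fun x => |hp x|) := fun x =>
    Finset.le_sup' (fun x => |hp x|) (Finset.mem_univ x)
  have hPm : ∀ x, |hm x| ≤ maxV (fun x => |hm x|) := fun x =>
    Finset.le_sup' (fun x => |hm x|) (Finset.mem_univ x)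
  have hPp0 : 0 ≤ maxV (fun x => |hp x|) := le_trans (abs_nonneg _) (hPp x₀)
  have hPm0 : 0 ≤ maxV (fun x => |hm x|) := le_trans (abs_nonneg _) (hPm x₀)
  set B : ℝ := 1 + maxV (fun x => |hp x|) + maxV (fun x => |hm x|) with hBdef
  clear_value B
  have hB1 : 1 ≤ B := by rw [hBdef]; linarith only [hPp0, hPm0]
  have hhpB : ∀ x, -B ≤ hp x ∧ hp x ≤ B := fun x =>
    abs_le.mp (le_trans (hPp x) (by rw [hBdef]; linarith only [hPm0]) : |hp x| ≤ B)
  have hhmB : ∀ x, -B ≤ hm x ∧ hm x ≤ B := fun x =>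
    abs_le.mp (le_trans (hPm x) (by rw [hBdef]; linarith only [hPp0]) : |hm x| ≤ B)
  have hB0 : 0 < B := by linarith only [hB1]
  set A : ℝ := W/μm + 1 with hAdef
  clear_value A
  have hA0 : 0 < A := by
    have h := div_nonneg hW0 hμm.le
    rw [hAdef]; linarith only [h]
  have hAx : ∀ x, W / μ x ≤ A := by
    intro x
    rw [hAdef]
    have h := div_le_div_of_nonneg_left hW0 hμm (hμmle x)
    linarith only [h]
  -- positive thresholds
  have hPne : (Finset.univ.filter (fun x => 0 < hp x)).Nonempty := ⟨x₁, by simp [hx1]⟩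
  set ε₁ : ℝ := (Finset.univ.filter (fun x => 0 < hp x)).inf' hPne hp with hε₁def
  clear_value ε₁
  have hε₁pos : 0 < ε₁ := by
    rw [hε₁def, Finset.lt_inf'_iff]; intro b hb; simpa using (Finset.mem_filter.mp hb).2
  have hε₁le : ∀ x, 0 < hp x → ε₁ ≤ hp x := by
    intro x h
    rw [hε₁def]
    exact Finset.inf'_le (b := x) hp (by simp [h])
  have hNne : (Finset.univ.filter (fun x => hm x < 0)).Nonempty := ⟨x₀, by simp [hm0neg]⟩
  set ε₂ : ℝ := (Finset.univ.filter (fun x => hm x < 0)).inf' hNne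
      (fun x => -hm x) with hε₂def
  clear_value ε₂
  have hε₂pos : 0 < ε₂ := by
    rw [hε₂def, Finset.lt_inf'_iff]
    intro b hb
    have := (Finset.mem_filter.mp hb).2
    simpa using this
  have hε₂le : ∀ x, hm x < 0 → ε₂ ≤ -hm x := by
    intro x h
    rw [hε₂def]
    exact Finset.inf'_le (b := x) (fun x => -hm x) (by simp [h])
  set ε₃ : ℝ := if h : (Finset.univ.filter (fun x => 0 < hm x)).Nonempty
      then (Finset.univ.filter (fun x => 0 < hm x)).inf' h hm else 1 with hε₃def
  clear_value ε₃
  have hε₃pos : 0 < ε₃ := by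
    rw [hε₃def]
    split_ifs with h
    · rw [Finset.lt_inf'_iff]; intro b hb; simpa using (Finset.mem_filter.mp hb).2
    · norm_num
  have hε₃le : ∀ x, 0 < hm x → ε₃ ≤ hm x := by
    intro x h
    rw [hε₃def, dif_pos ⟨x, by simp [h]⟩]
    exact Finset.inf'_le (b := x) hm (by simp [h])
  -- derived constants
  set C₁ : ℝ := 2*((2*A + 0 + 1)/c) + 2 with hC₁def
  clear_value C₁
  have hC₁0 : 0 < C₁ := by
    have h : 0 < (2*A + 0 + 1)/c := div_pos (by linarith only [hA0]) hc
    rw [hC₁def]; linarith only [h]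
  set C₂ : ℝ := 2*((2*A + B + 1)/ε₂) + 2 with hC₂def
  clear_value C₂
  have hC₂0 : 0 < C₂ := by
    have h : 0 < (2*A + B + 1)/ε₂ := div_pos (by linarith only [hA0, hB0]) hε₂pos
    rw [hC₂def]; linarith only [h]
  set G : ℝ := 1 + (μM + W)/ωm with hGdef
  clear_value G
  have hG1 : 1 ≤ G := by
    have h : 0 ≤ (μM + W)/ωm := div_nonneg (by linarith only [hμM, hW0]) hωm.le
    rw [hGdef]
    linarith only [h]
  set H : ℝ := 2*G with hHdef
  clear_value H
  have hH2 : 2 ≤ H := by rw [hHdef]; linarith only [hG1]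
  have hH1 : 1 ≤ H := by linarith only [hH2]
  set K₁ : ℝ := H^NN with hK₁def
  clear_value K₁
  have hK₁1 : 1 ≤ K₁ := by rw [hK₁def]; exact one_le_pow₀ hH1
  set α : ℝ := 1 + A*((A*K₁ + 1)/ε₃ + 2*K₁) with hαdef
  clear_value α
  set β : ℝ := B + A*(C₂ + (A*K₁*B + B)/ε₃ + 2*K₁*B + 2) + 6*A with hβdef
  clear_value β
  have hα0 : 0 < α := by
    rw [hαdef]
    have hAK : 0 < A*K₁ := mul_pos hA0 (lt_of_lt_of_le one_pos hK₁1)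
    have h1 : 0 < (A*K₁ + 1)/ε₃ := div_pos (by linarith only [hAK]) hε₃pos
    nlinarith only [h1, hA0, hK₁1]
  have hβ0 : 0 < β := by
    rw [hβdef]
    have hAKB : 0 ≤ A*K₁*B :=
      mul_nonneg (mul_nonneg hA0.le (by linarith only [hK₁1])) hB0.le
    have h1 : 0 ≤ (A*K₁*B + B)/ε₃ :=
      div_nonneg (by linarith only [hAKB, hB0]) hε₃pos.le
    nlinarith only [h1, hA0, hK₁1, hC₂0, hB0, hAKB]
  set d : ℝ := ε₁ * Real.exp (-(C₁/6)) with hddef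
  clear_value d
  have hd0 : 0 < d := by
    rw [hddef]
    exact mul_pos hε₁pos (Real.exp_pos _)
  refine ⟨max (max (A^2/c) B) (144*A^2*(α+β)/d + 1), ?_⟩
  rintro Λ hΛ ⟨u, hu⟩
  have hΛA2c : A^2/c < Λ := lt_of_le_of_lt (le_trans (le_max_left _ _) (le_max_left _ _)) hΛ
  have hΛB : B < Λ := lt_of_le_of_lt (le_trans (le_max_right _ _) (le_max_left _ _)) hΛ
  have hΛ3 : 144*A^2*(α+β)/d + 1 < Λ := lt_of_le_of_lt (le_max_right _ _) hΛ
  have hΛpos : 0 < Λ := by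
    have hq : 0 < 144*A^2*(α+β)/d := by
      have hA2 : (0:ℝ) < A^2 := pow_pos hA0 2
      exact div_pos (by nlinarith only [hA2, hα0, hβ0]) hd0
    linarith only [hΛ3, hq]
  have hΛB0 : 0 < Λ + B := by linarith only [hΛpos, hB0]
  -- the key eventual condition
  have hΛ4 : α*Λ + β < d * Real.exp (Λ/(6*A)) := cond4' hA0 hα0 hβ0 hd0 hΛ3
  -- the equation
  have heq : ∀ x, graphLap ω μ u x = Λ - hp x * Real.exp (u x) - hm x * Real.exp (-u x) := by
    intro x
    have h := hu x
    linarith only [h]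
  -- max and min of u
  obtain ⟨xp, -, hxp⟩ := Finset.exists_mem_eq_sup' (Finset.univ_nonempty (α := V)) u
  obtain ⟨xm, -, hxm⟩ := Finset.exists_mem_eq_inf' (Finset.univ_nonempty (α := V)) u
  set M : ℝ := u xp with hMdef
  set m : ℝ := u xm with hmdef
  have hMax : ∀ y, u y ≤ M := by
    intro y; rw [← hxp]; exact Finset.le_sup' u (Finset.mem_univ y)
  have hMin : ∀ y, m ≤ u y := by
    intro y; rw [← hxm]; exact Finset.inf'_le u (Finset.mem_univ y)
  have hmM : m ≤ M := hMin xp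
  clear_value M m
  -- Laplacian bounds
  have hlapUB : ∀ x, graphLap ω μ u x ≤ A * (M - u x) := by
    intro x
    have hsum : ∑ y, ω x y * (u y - u x) ≤ W * (M - u x) := by
      calc ∑ y, ω x y * (u y - u x) ≤ ∑ y, ω x y * (M - u x) := by
            apply Finset.sum_le_sum
            intro y _
            exact mul_le_mul_of_nonneg_left (by linarith only [hMax y]) (hnonneg x y)
        _ = (∑ y, ω x y) * (M - u x) := by rw [← Finset.sum_mul]
        _ ≤ W * (M - u x) :=
            mul_le_mul_of_nonneg_right (hWge x) (by linarith only [hMax x])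
    simp only [graphLap]
    calc (1 / μ x) * ∑ y, ω x y * (u y - u x) ≤ (1 / μ x) * (W * (M - u x)) := by
          have h0 : (0:ℝ) < 1 / μ x := by have := hμ x; positivity
          exact mul_le_mul_of_nonneg_left hsum h0.le
      _ = (W / μ x) * (M - u x) := by field_simp
      _ ≤ A * (M - u x) :=
          mul_le_mul_of_nonneg_right (hAx x) (by linarith only [hMax x])
  have hlapLB : ∀ x, -(A * (u x - m)) ≤ graphLap ω μ u x := by
    intro x
    have hsum : -(W * (u x - m)) ≤ ∑ y, ω x y * (u y - u x) := by
      have h1 : ∑ y, ω x y * (m - u x) ≤ ∑ y, ω x y * (u y - u x) := by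
        apply Finset.sum_le_sum
        intro y _
        exact mul_le_mul_of_nonneg_left (by linarith only [hMin y]) (hnonneg x y)
      have h2 : ∑ y, ω x y * (m - u x) = (∑ y, ω x y) * (m - u x) := by
        rw [← Finset.sum_mul]
      have h3 : (∑ y, ω x y) * (u x - m) ≤ W * (u x - m) :=
        mul_le_mul_of_nonneg_right (hWge x) (by linarith only [hMin x])
      have h4 : -(W * (u x - m)) ≤ (∑ y, ω x y) * (m - u x) := by linarith only [h3]
      linarith only [h1, h2, h4]
    simp only [graphLap]
    have h2 : (1 / μ x) * (-(W * (u x - m))) ≤ (1 / μ x) * ∑ y, ω x y * (u y - u x) := by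
      have h0 : (0:ℝ) < 1 / μ x := by have := hμ x; positivity
      exact mul_le_mul_of_nonneg_left hsum h0.le
    have h3 : -(A * (u x - m)) ≤ -((W / μ x) * (u x - m)) := by
      have h := mul_le_mul_of_nonneg_right (hAx x) (by linarith only [hMin x] : (0:ℝ) ≤ u x - m)
      linarith only [h]
    have h4 : -((W / μ x) * (u x - m)) = (1 / μ x) * (-(W * (u x - m))) := by
      field_simp
    linarith only [h2, h3, h4]
  have hflux : ∀ x y, ω x y * (u y - u x) ≤ μ x * graphLap ω μ u x + W * (u x - m) := by
    intro x y
    have hμx := hμ x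
    have hS : μ x * graphLap ω μ u x = ∑ z, ω x z * (u z - u x) := by
      simp only [graphLap]; field_simp
    have hsplit : ∑ z ∈ Finset.univ.erase y, ω x z * (u z - u x) + ω x y * (u y - u x)
        = ∑ z, ω x z * (u z - u x) :=
      Finset.sum_erase_add _ _ (Finset.mem_univ y)
    have h1 : ∑ z ∈ Finset.univ.erase y, ω x z * (m - u x)
        ≤ ∑ z ∈ Finset.univ.erase y, ω x z * (u z - u x) := by
      apply Finset.sum_le_sum
      intro z _
      exact mul_le_mul_of_nonneg_left (by linarith only [hMin z]) (hnonneg x z)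
    have h2 : ∑ z ∈ Finset.univ.erase y, ω x z ≤ W := by
      refine le_trans ?_ (hWge x)
      exact Finset.sum_le_sum_of_subset_of_nonneg (Finset.subset_univ _)
        (fun z _ _ => hnonneg x z)
    have h3 : ∑ z ∈ Finset.univ.erase y, ω x z * (m - u x)
        = (∑ z ∈ Finset.univ.erase y, ω x z) * (m - u x) := by rw [← Finset.sum_mul]
    have h4 : (∑ z ∈ Finset.univ.erase y, ω x z) * (u x - m) ≤ W * (u x - m) :=
      mul_le_mul_of_nonneg_right h2 (by linarith only [hMin x])
    linarith only [hS, hsplit, h1, h3, h4]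
  -- Step 1: M > 0
  have hM0 : 0 < M := by
    by_contra hM
    push_neg at hM
    have h1 := hlapUB x₀
    have h2 := heq x₀
    have hp0 : hp x₀ * Real.exp (u x₀) ≤ 0 :=
      mul_nonpos_of_nonpos_of_nonneg hp0le (Real.exp_pos _).le
    have hcc : c * Real.exp (-u x₀) = -(hm x₀ * Real.exp (-u x₀)) := by
      rw [hcdef]; ring
    have hkey : Λ + c * Real.exp (-u x₀) ≤ A * (M + -u x₀) := by
      rw [h2] at h1
      have hA2 : A * (M - u x₀) = A * (M + -u x₀) := by ring
      rw [hA2] at h1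
      linarith only [h1, hcc, hp0]
    exact caseM0 hc hA0 hM hΛA2c hkey
  -- Step 2: at the max point, hp is positive
  have hlapxp : graphLap ω μ u xp ≤ 0 := by
    have h := hlapUB xp
    rw [← hMdef] at h
    simpa using h
  have hexpM1 : Real.exp (-M) ≤ 1 := Real.exp_le_one_iff.mpr (by linarith only [hM0])
  have hstar0 : Λ - B ≤ hp xp * Real.exp M := by
    have h2 := heq xp
    rw [← hMdef] at h2
    have hhm : hm xp * Real.exp (-M) ≤ B :=
      bnd_mul (hhmB xp).1 (hhmB xp).2 (Real.exp_pos _) hexpM1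
    linarith only [hlapxp, h2, hhm]
  have hppos : 0 < hp xp := by
    by_contra h
    push_neg at h
    have h5 : hp xp * Real.exp M ≤ 0 := mul_nonpos_of_nonpos_of_nonneg h (Real.exp_pos M).le
    linarith only [hstar0, hΛB, h5]
  have hε₁xp : ε₁ ≤ hp xp := hε₁le xp hppos
  -- Step 3: u x₀ is not too low
  have hu₀ : -u x₀ ≤ 2*M + C₁ := by
    by_contra h
    push_neg at h
    have h1 := hlapUB x₀
    have h2 := heq x₀
    have hp0 : hp x₀ * Real.exp (u x₀) ≤ 0 :=
      mul_nonpos_of_nonpos_of_nonneg hp0le (Real.exp_pos _).le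
    have hcc : c * Real.exp (-u x₀) = -(hm x₀ * Real.exp (-u x₀)) := by
      rw [hcdef]; ring
    have hkey : c * Real.exp (-u x₀) ≤ A*(M + -u x₀) + 0 := by
      rw [h2] at h1
      have hA2 : A * (M - u x₀) = A * (M + -u x₀) := by ring
      rw [hA2] at h1
      linarith only [h1, hcc, hp0, hΛpos]
    rw [hC₁def] at h
    exact no_deep hc hA0 le_rfl hM0.le (by linarith only [h]) hkey
  -- Λ ≤ 3AM + AC₁
  have hΛM : Λ ≤ 3*A*M + A*C₁ := by
    have h1 := hlapUB x₀
    have h2 := heq x₀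
    have hp0 : hp x₀ * Real.exp (u x₀) ≤ 0 :=
      mul_nonpos_of_nonpos_of_nonneg hp0le (Real.exp_pos _).le
    have hcc : c * Real.exp (-u x₀) = -(hm x₀ * Real.exp (-u x₀)) := by
      rw [hcdef]; ring
    have hpos : 0 < c * Real.exp (-u x₀) := mul_pos hc (Real.exp_pos _)
    have hkey : Λ ≤ A * (M - u x₀) := by
      rw [h2] at h1
      linarith only [h1, hcc, hp0, hpos]
    have h3 : A * (M - u x₀) ≤ A * (3*M + C₁) :=
      mul_le_mul_of_nonneg_left (by linarith only [hu₀, hM0]) hA0.le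
    linarith only [hkey, h3]
  -- oscillation bound
  set RM : ℝ := K₁ * (Λ + B) with hRMdef
  have hRM0 : 0 ≤ RM := by
    rw [hRMdef]
    exact mul_nonneg (by linarith only [hK₁1]) hΛB0.le
  set E : ℝ := (A*RM + Λ + B)/ε₃ with hEdef
  have hE0 : 0 < E := by
    rw [hEdef]
    apply div_pos _ hε₃pos
    nlinarith only [hA0, hRM0, hΛB0]
  clear_value RM E
  have hD : M - m ≤ 3*M + C₂ + E + 2 + 2*RM := by
    by_cases hcase : -(2*M + C₂ + E + 2) - RM < m
    · linarith only [hcase, hmM, hRM0]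
    · push_neg at hcase
      exfalso
      have claim : ∀ x, u x ≤ m + RM → hm x = 0 ∧ graphLap ω μ u x ≤ Λ + B := by
        intro x hx
        have hxneg : u x ≤ -(2*M + C₂ + E + 2) := by linarith only [hcase, hx]
        have hux0 : u x ≤ 0 := by linarith only [hxneg, hM0, hC₂0, hE0]
        have hex1 : Real.exp (u x) ≤ 1 := Real.exp_le_one_iff.mpr hux0
        have hhpe : hp x * Real.exp (u x) ≤ B :=
          bnd_mul (hhpB x).1 (hhpB x).2 (Real.exp_pos _) hex1
        have hhpe' : -B ≤ hp x * Real.exp (u x) := by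
          nlinarith only [(hhpB x).1, Real.exp_pos (u x), hex1, hB0]
        rcases lt_trichotomy (hm x) 0 with h | h | h
        · exfalso
          have h1 := hlapUB x
          have h2 := heq x
          have hle := mul_le_mul_of_nonneg_right (hε₂le x h) (Real.exp_pos (-u x)).le
          have hkey : ε₂ * Real.exp (-u x) ≤ A*(M + -u x) + B := by
            rw [h2] at h1
            have hA2 : A * (M - u x) = A * (M + -u x) := by ring
            rw [hA2] at h1
            linarith only [h1, hle, hhpe, hΛpos]
          refine no_deep hε₂pos hA0 hB0.le hM0.le ?_ hkey
          rw [hC₂def] at hxneg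
          linarith only [hxneg, hE0]
        · refine ⟨h, ?_⟩
          rw [heq x, h]
          have h0 : (0:ℝ) * Real.exp (-u x) = 0 := by ring
          linarith only [h0, hhpe']
        · exfalso
          have h1 := hlapLB x
          have h2 := heq x
          have hle := mul_le_mul_of_nonneg_right (hε₃le x h) (Real.exp_pos (-u x)).le
          have hAm : A * (u x - m) ≤ A * RM :=
            mul_le_mul_of_nonneg_left (by linarith only [hx]) hA0.le
          have hkey : ε₃ * Real.exp (-u x) ≤ Λ + A*RM + B := by
            rw [h2] at h1
            linarith only [h1, hle, hhpe', hAm]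
          have hEbig : Real.exp (-u x) ≤ E := by
            rw [hEdef, le_div_iff₀ hε₃pos]
            linarith only [hkey]
          have hEE : E < Real.exp (-u x) := by
            have h5 : E ≤ -u x := by linarith only [hxneg, hM0, hC₂0]
            have h6 := Real.add_one_le_exp E
            have h7 := Real.exp_le_exp.mpr h5
            linarith only [h5, h6, h7]
          linarith only [hEbig, hEE]
      -- path propagation
      have hq0 : pf xm xp 0 = xm := hpf0 xm xp
      have hqn : pf xm xp (nf xm xp) = xp := hpfn xm xp
      have hqpos : ∀ i < nf xm xp, 0 < ω (pf xm xp i) (pf xm xp (i+1)) := hpfpos xm xp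
      have hnNN : nf xm xp ≤ NN := hNNle xm xp
      have claim2 : ∀ j, j ≤ nf xm xp → u (pf xm xp j) ≤ m + (H^j - 1)*(Λ + B) := by
        intro j
        induction j with
        | zero =>
          intro _
          rw [hq0, hmdef]
          norm_num
        | succ j ih =>
          intro hjn
          have hj : j ≤ nf xm xp := by omega
          have IH := ih hj
          have hHj1 : 1 ≤ H^j := one_le_pow₀ hH1
          have hHjNN : H^j ≤ K₁ := by
            rw [hK₁def]
            exact pow_le_pow_right₀ hH1 (le_trans hj hnNN)
          have hRMge : (H^j - 1)*(Λ+B) ≤ RM := by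
            rw [hRMdef]
            exact mul_le_mul_of_nonneg_right (by linarith only [hHjNN]) hΛB0.le
          have hujRM : u (pf xm xp j) ≤ m + RM := by linarith only [IH, hRMge]
          obtain ⟨hm0, hlap⟩ := claim (pf xm xp j) hujRM
          have hedgej : 0 < ω (pf xm xp j) (pf xm xp (j+1)) := hqpos j (by omega)
          have hHmono : H^j ≤ H^(j+1) := pow_le_pow_right₀ hH1 (by omega)
          rcases le_or_gt (u (pf xm xp (j+1))) (u (pf xm xp j)) with hmono | hmono
          · have h5 : (H^j - 1)*(Λ+B) ≤ (H^(j+1) - 1)*(Λ+B) :=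
              mul_le_mul_of_nonneg_right (by linarith only [hHmono]) hΛB0.le
            linarith only [IH, hmono, h5]
          · have hfl := hflux (pf xm xp j) (pf xm xp (j+1))
            have hμ1 : μ (pf xm xp j) * graphLap ω μ u (pf xm xp j)
                ≤ μ (pf xm xp j) * (Λ + B) :=
              mul_le_mul_of_nonneg_left hlap (hμ (pf xm xp j)).le
            have hμ2 : μ (pf xm xp j) * (Λ + B) ≤ μM * (Λ + B) :=
              mul_le_mul_of_nonneg_right (hμMge (pf xm xp j)) hΛB0.le
            have hWterm : W * (u (pf xm xp j) - m) ≤ W * ((H^j - 1)*(Λ+B)) :=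
              mul_le_mul_of_nonneg_left (by linarith only [IH]) hW0
            have hωedge : ωm ≤ ω (pf xm xp j) (pf xm xp (j+1)) := hωmle _ _ hedgej
            have hωd := mul_le_mul_of_nonneg_right hωedge
              (by linarith only [hmono] : (0:ℝ) ≤ u (pf xm xp (j+1)) - u (pf xm xp j))
            have hstep : ωm * (u (pf xm xp (j+1)) - u (pf xm xp j))
                ≤ μM * (Λ + B) + W * ((H^j - 1)*(Λ+B)) := by
              linarith only [hfl, hμ1, hμ2, hWterm, hωd]
            have hGωm : G * ωm = ωm + μM + W := by
              rw [hGdef]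
              field_simp
              ring
            have htarget : μM * (Λ + B) + W * ((H^j - 1)*(Λ+B))
                ≤ ωm * ((H*H^j - H^j)*(Λ+B)) :=
              step_target hωm hμM hW0 hΛB0 hHj1 hGωm hHdef
            have hdiff : u (pf xm xp (j+1)) - u (pf xm xp j) ≤ (H*H^j - H^j)*(Λ+B) :=
              le_of_mul_le_mul_left (le_trans hstep htarget) hωm
            have hpow : (H:ℝ)^(j+1) = H*H^j := by rw [pow_succ]; ring
            rw [hpow]
            linarith only [IH, hdiff]
      have hfin := claim2 (nf xm xp) le_rfl
      rw [hqn, ← hMdef] at hfin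
      have hHn : H^(nf xm xp) ≤ K₁ := by
        rw [hK₁def]
        exact pow_le_pow_right₀ hH1 hnNN
      have hMRM : M ≤ m + RM := by
        have h5 : (H^(nf xm xp) - 1)*(Λ+B) ≤ RM := by
          rw [hRMdef]
          exact mul_le_mul_of_nonneg_right (by linarith only [hHn]) hΛB0.le
        linarith only [hfin, h5]
      linarith only [hcase, hMRM, hM0, hC₂0, hE0]
  -- final contradiction
  have hstar : ε₁ * Real.exp M ≤ Λ + B + A*(M - m) := by
    have h1 := hlapLB xp
    have h2 := heq xp
    rw [← hMdef] at h1 h2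
    have hhm2 : -B ≤ hm xp * Real.exp (-M) := by
      nlinarith only [(hhmB xp).1, Real.exp_pos (-M), hexpM1, hB0]
    have hhp : hp xp * Real.exp M ≤ Λ + A*(M-m) + B := by
      rw [h2] at h1
      linarith only [h1, hhm2]
    have h6 := mul_le_mul_of_nonneg_right hε₁xp (Real.exp_pos M).le
    linarith only [hhp, h6]
  set Z : ℝ := Λ + B + A*(C₂ + E + 2 + 2*RM) with hZdef
  have hZ0 : 0 ≤ Z := by
    rw [hZdef]
    have h5 : 0 ≤ A*(C₂ + E + 2 + 2*RM) := by
      apply mul_nonneg hA0.le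
      nlinarith only [hC₂0, hE0, hRM0]
    linarith only [h5, hΛpos, hB0]
  clear_value Z
  have h1 : ε₁ * Real.exp M ≤ Z + 3*A*M := by
    have h2 : A*(M - m) ≤ A*(3*M + C₂ + E + 2 + 2*RM) := mul_le_mul_of_nonneg_left hD hA0.le
    have h3 : A*(3*M + C₂ + E + 2 + 2*RM) = 3*A*M + A*(C₂ + E + 2 + 2*RM) := by ring
    rw [hZdef]
    linarith only [hstar, h2, h3]
  have hsplitM : ε₁ * Real.exp M = (ε₁ * Real.exp (M/2)) * Real.exp (M/2) := by
    rw [mul_assoc, ← Real.exp_add]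
    ring_nf
  have h5 : ε₁ * Real.exp (M/2) ≤ Z + 6*A :=
    final_h5 hZ0 hA0 hM0 (mul_nonneg hε₁pos.le (Real.exp_pos _).le) (by rw [← hsplitM]; exact h1)
  have hM2 : Λ/(6*A) - C₁/6 ≤ M/2 := by
    rw [sub_le_iff_le_add, div_le_iff₀ (by linarith only [hA0] : (0:ℝ) < 6*A)]
    nlinarith only [hΛM, hA0]
  have h6 : ε₁ * Real.exp (Λ/(6*A) - C₁/6) ≤ Z + 6*A :=
    le_trans (mul_le_mul_of_nonneg_left (Real.exp_le_exp.mpr hM2) hε₁pos.le) h5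
  have h7 : ε₁ * Real.exp (Λ/(6*A) - C₁/6) = d * Real.exp (Λ/(6*A)) := by
    rw [hddef, Real.exp_sub, Real.exp_neg]
    field_simp
  have h8 : Z + 6*A = α*Λ + β := by
    rw [hZdef, hEdef, hRMdef, hαdef, hβdef]
    field_simp
    ring
  rw [h7, h8] at h6
  linarith only [h6, hΛ4]
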